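/- For any 1 ≤ i ≤ n−1 one has α_i = min{ (R_{i+1}−R_i)/2 + e, R_{i+1}−R_i+d_i, R_{i+1}−R_i+α'_{i−1}(1,i), R_{i+1}−R_i+α'_1(i+1,n) }, where the term involving α'_{i−1}(1,i) is omitted when i = 1 and the term involving α'_1(i+1,n) is omitted when i = n−1. -/

import Mathlib

/-!
Combinatorial setting abstracting a good BONG over a dyadic local field.
`R : ℕ → ℤ` are the orders `R_i = ord a_i` (indices `1,…,n` used),
`d : ℕ → EReal` are the values `d_j = d(-a_j a_{j+1}) ∈ ℕ ∪ {∞}`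
(the allowed values are encoded in condition (G3) below).
-/

/-- The term `(R_{i+1} - R_i)/2 + e` appearing in the definition of `α_i`. -/
noncomputable def halfTerm (e : ℤ) (R : ℕ → ℤ) (i : ℕ) : EReal :=
  (((R (i + 1) - R i : ℝ) / 2 + (e : ℝ) : ℝ) : EReal)

/-- The set whose minimum defines `α_i`. -/
noncomputable def alphaSet (e : ℤ) (n : ℕ) (R : ℕ → ℤ) (d : ℕ → EReal) (i : ℕ) :
    Set EReal :=
  {halfTerm e R i}
    ∪ {x | ∃ j, 1 ≤ j ∧ j ≤ i ∧ x = ((R (i + 1) - R j : ℝ) : EReal) + d j}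
    ∪ {x | ∃ j, i ≤ j ∧ j + 1 ≤ n ∧ x = ((R (j + 1) - R i : ℝ) : EReal) + d j}

/-- The invariant `α_i = α_i(L)`, for `1 ≤ i ≤ n - 1`. -/
noncomputable def alpha (e : ℤ) (n : ℕ) (R : ℕ → ℤ) (d : ℕ → EReal) (i : ℕ) : EReal :=
  sInf (alphaSet e n R d i)

/-- `α'_m(k,l)`: the `α`-invariant of the truncated data `R_k,…,R_l`, `d_k,…,d_{l-1}`. -/
noncomputable def alphaT (e : ℤ) (R : ℕ → ℤ) (d : ℕ → EReal) (k l m : ℕ) : EReal :=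
  alpha e (l - k + 1) (fun j => R (k + j - 1)) (fun j => d (k + j - 1)) m

/-- Conditions (G1)-(G4) on the data `(e, n, R, d)`, abstracting a good BONG. -/
structure GoodBONG (e : ℤ) (n : ℕ) (R : ℕ → ℤ) (d : ℕ → EReal) : Prop where
  he : 1 ≤ e
  hn : 2 ≤ n
  g1 : ∀ i, 1 ≤ i → i + 2 ≤ n → R i ≤ R (i + 2)
  g2a : ∀ j, 1 ≤ j → j + 1 ≤ n → 0 ≤ R (j + 1) - R j + 2 * e
  g2b : ∀ j, 1 ≤ j → j + 1 ≤ n → 0 ≤ ((R (j + 1) - R j : ℝ) : EReal) + d j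
  g3 : ∀ j, 1 ≤ j → j + 1 ≤ n →
    d j = 0 ∨ (∃ m : ℕ, Odd m ∧ (m : ℤ) ≤ 2 * e - 1 ∧ d j = ((m : ℝ) : EReal)) ∨
      d j = (((2 * e : ℤ) : ℝ) : EReal) ∨ d j = ⊤
  g4odd : ∀ j, 1 ≤ j → j + 1 ≤ n → Odd (R (j + 1) - R j) →
    0 < R (j + 1) - R j ∧ d j = 0
  g4even : ∀ j, 1 ≤ j → j + 1 ≤ n → Even (R (j + 1) - R j) → 0 < d j

/-- Translation by a real constant as an order isomorphism of `EReal`. -/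
noncomputable def erealAddIso (c : ℝ) : EReal ≃o EReal where
  toFun x := (c : EReal) + x
  invFun x := ((-c : ℝ) : EReal) + x
  left_inv x := by
    induction x using EReal.rec with
    | bot => simp
    | coe x =>
      show ((-c : ℝ) : EReal) + ((c : ℝ) + (x : ℝ)) = (x : ℝ)
      rw [← EReal.coe_add, ← EReal.coe_add]; norm_num
    | top => simp
  right_inv x := by
    induction x using EReal.rec with
    | bot => simp
    | coe x =>
      show ((c : ℝ) : EReal) + ((-c : ℝ) + (x : ℝ)) = (x : ℝ)
      rw [← EReal.coe_add, ← EReal.coe_add]; norm_num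
    | top => simp
  map_rel_iff' := by
    intro a b
    constructor
    · exact fun hab => (EReal.addLECancellable_coe c) hab
    · exact fun hab => (add_le_add_right hab (c : EReal) : (c : EReal) + a ≤ (c : EReal) + b)

lemma ereal_coe_add_sInf (c : ℝ) (A : Set EReal) :
    (c : EReal) + sInf A = sInf ((fun x => (c : EReal) + x) '' A) := by
  refine le_antisymm (le_sInf ?_) ?_
  · rintro _ ⟨x, hx, rfl⟩
    exact add_le_add_right (sInf_le hx) _
  · have h2 : (erealAddIso c).symm (sInf ((fun x => (c : EReal) + x) '' A)) ≤ sInf A := by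
      refine le_sInf fun x hx => ?_
      rw [OrderIso.symm_apply_le]
      exact sInf_le ⟨x, hx, rfl⟩
    calc sInf ((fun x => (c : EReal) + x) '' A)
        = (erealAddIso c) ((erealAddIso c).symm (sInf ((fun x => (c : EReal) + x) '' A))) :=
          ((erealAddIso c).apply_symm_apply _).symm
      _ ≤ (erealAddIso c) (sInf A) := (erealAddIso c).monotone h2
      _ = (c : EReal) + sInf A := rfl

lemma coe_add_coe_add (a b : ℝ) (x : EReal) :
    (a : EReal) + ((b : EReal) + x) = ((a + b : ℝ) : EReal) + x := by
  rw [← add_assoc, ← EReal.coe_add]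


/-- `α_i = min{(R_{i+1}-R_i)/2+e, R_{i+1}-R_i+d_i, R_{i+1}-R_i+α'_{i-1}(1,i), R_{i+1}-R_i+α'_1(i+1,n)}`,
the third term being omitted when `i = 1` and the fourth when `i = n-1`. -/
theorem stmt8 (e : ℤ) (n : ℕ) (R : ℕ → ℤ) (d : ℕ → EReal)
    (h : GoodBONG e n R d) (i : ℕ) (hi : 1 ≤ i) (hin : i + 1 ≤ n) :
    alpha e n R d i =
      sInf ({halfTerm e R i, ((R (i + 1) - R i : ℝ) : EReal) + d i}
        ∪ {x | 2 ≤ i ∧ x = ((R (i + 1) - R i : ℝ) : EReal) + alphaT e R d 1 i (i - 1)}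
        ∪ {x | i + 2 ≤ n ∧
            x = ((R (i + 1) - R i : ℝ) : EReal) + alphaT e R d (i + 1) n 1}) := by
  have hii : i - 1 + 1 = i := by omega
  -- the two truncated alphas, in explicit form
  have hT1 : alphaT e R d 1 i (i - 1) = sInf (alphaSet e i R d (i - 1)) := by
    unfold alphaT
    have hR1 : (fun j => R (1 + j - 1)) = R := by funext j; congr 1; omega
    have hd1 : (fun j => d (1 + j - 1)) = d := by funext j; congr 1; omega
    rw [hR1, hd1, hii]
    rfl
  have hT2 : alphaT e R d (i + 1) n 1
      = sInf (alphaSet e (n - i) (fun j => R (i + j)) (fun j => d (i + j)) 1) := by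
    unfold alphaT
    have hR2 : (fun j => R (i + 1 + j - 1)) = (fun j => R (i + j)) := by
      funext j; congr 1; omega
    have hd2 : (fun j => d (i + 1 + j - 1)) = (fun j => d (i + j)) := by
      funext j; congr 1; omega
    have hnn : n - (i + 1) + 1 = n - i := by omega
    rw [hR2, hd2, hnn]
    rfl
  rw [alpha]
  refine le_antisymm (le_sInf ?_) (le_sInf ?_)
  · -- every element of the RHS set dominates the infimum of the alphaSet
    intro x hx
    simp only [Set.mem_union, Set.mem_insert_iff, Set.mem_singleton_iff,
      Set.mem_setOf_eq] at hx
    rcases hx with ((hx | hx) | ⟨h2i, hx⟩) | ⟨h2n, hx⟩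
    · subst hx
      refine sInf_le ?_
      exact Or.inl (Or.inl rfl)
    · subst hx
      refine sInf_le ?_
      simp only [alphaSet, Set.mem_union, Set.mem_singleton_iff, Set.mem_setOf_eq]
      exact Or.inl (Or.inr ⟨i, hi, le_rfl, rfl⟩)
    · subst hx
      rw [hT1, ereal_coe_add_sInf]
      refine le_sInf ?_
      rintro _ ⟨y, hy, rfl⟩
      show sInf (alphaSet e n R d i) ≤ ((R (i + 1) - R i : ℝ) : EReal) + y
      simp only [alphaSet, Set.mem_union, Set.mem_singleton_iff, Set.mem_setOf_eq,
        hii] at hy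
      rcases hy with (hy | ⟨j, hj1, hj2, hy⟩) | ⟨j, hj1, hj2, hy⟩
      · subst hy
        refine le_trans (sInf_le (show halfTerm e R i ∈ alphaSet e n R d i from
          Or.inl (Or.inl rfl))) ?_
        rw [halfTerm, halfTerm, hii, ← EReal.coe_add, EReal.coe_le_coe_iff]
        have hg : R (i - 1) ≤ R (i + 1) := by
          have hg0 := h.g1 (i - 1) (by omega) (by omega)
          have h12 : i - 1 + 2 = i + 1 := by omega
          rwa [h12] at hg0
        have hg' : ((R (i - 1) : ℝ)) ≤ (R (i + 1) : ℝ) := by exact_mod_cast hg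
        push_cast
        linarith
      · subst hy
        rw [coe_add_coe_add]
        refine sInf_le ?_
        refine Or.inl (Or.inr ⟨j, hj1, by omega, ?_⟩)
        congr 1
        rw [EReal.coe_eq_coe_iff]
        push_cast
        ring
      · subst hy
        have hji : j = i - 1 := by omega
        subst hji
        rw [hii, coe_add_coe_add]
        refine sInf_le ?_
        refine Or.inl (Or.inr ⟨i - 1, by omega, by omega, ?_⟩)
        congr 1
        rw [EReal.coe_eq_coe_iff]
        push_cast
        ring
    · subst hx
      rw [hT2, ereal_coe_add_sInf]
      refine le_sInf ?_
      rintro _ ⟨y, hy, rfl⟩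
      show sInf (alphaSet e n R d i) ≤ ((R (i + 1) - R i : ℝ) : EReal) + y
      simp only [alphaSet, Set.mem_union, Set.mem_singleton_iff, Set.mem_setOf_eq] at hy
      rcases hy with (hy | ⟨j, hj1, hj2, hy⟩) | ⟨j, hj1, hj2, hy⟩
      · subst hy
        refine le_trans (sInf_le (show halfTerm e R i ∈ alphaSet e n R d i from
          Or.inl (Or.inl rfl))) ?_
        show ((((R (i + 1) - R i : ℝ) / 2 + (e : ℝ) : ℝ)) : EReal)
          ≤ ((R (i + 1) - R i : ℝ) : EReal)
            + ((((R (i + 2) - R (i + 1) : ℝ) / 2 + (e : ℝ) : ℝ)) : EReal)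
        rw [← EReal.coe_add, EReal.coe_le_coe_iff]
        have hg : R i ≤ R (i + 2) := h.g1 i hi h2n
        have hg' : ((R i : ℝ)) ≤ (R (i + 2) : ℝ) := by exact_mod_cast hg
        push_cast
        linarith
      · have hj : j = 1 := by omega
        subst hj
        subst hy
        show sInf (alphaSet e n R d i)
          ≤ ((R (i + 1) - R i : ℝ) : EReal)
            + (((R (i + (1 + 1)) - R (i + 1) : ℝ) : EReal) + d (i + 1))
        have h12 : i + (1 + 1) = i + 1 + 1 := rfl
        rw [h12, coe_add_coe_add]
        refine sInf_le ?_
        simp only [alphaSet, Set.mem_union, Set.mem_singleton_iff, Set.mem_setOf_eq]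
        refine Or.inr ⟨i + 1, by omega, by omega, ?_⟩
        congr 1
        rw [EReal.coe_eq_coe_iff]
        push_cast
        ring
      · subst hy
        show sInf (alphaSet e n R d i)
          ≤ ((R (i + 1) - R i : ℝ) : EReal)
            + (((R (i + (j + 1)) - R (i + 1) : ℝ) : EReal) + d (i + j))
        have h12 : i + (j + 1) = i + j + 1 := rfl
        rw [h12, coe_add_coe_add]
        refine sInf_le ?_
        simp only [alphaSet, Set.mem_union, Set.mem_singleton_iff, Set.mem_setOf_eq]
        refine Or.inr ⟨i + j, by omega, by omega, ?_⟩
        congr 1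
        rw [EReal.coe_eq_coe_iff]
        push_cast
        ring
  · -- the infimum of the RHS set is below every element of the alphaSet
    intro x hx
    simp only [alphaSet, Set.mem_union, Set.mem_singleton_iff, Set.mem_setOf_eq] at hx
    rcases hx with (hx | ⟨j, hj1, hj2, hx⟩) | ⟨j, hj1, hj2, hx⟩
    · subst hx
      refine sInf_le ?_
      simp only [Set.mem_union, Set.mem_insert_iff, Set.mem_singleton_iff,
        Set.mem_setOf_eq]
      exact Or.inl (Or.inl (Or.inl trivial))
    · subst hx
      by_cases hji : j = i
      · subst hji
        refine sInf_le ?_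
        simp only [Set.mem_union, Set.mem_insert_iff, Set.mem_singleton_iff,
          Set.mem_setOf_eq]
        exact Or.inl (Or.inl (Or.inr trivial))
      · have hmem : ((R (i + 1) - R i : ℝ) : EReal) + alphaT e R d 1 i (i - 1) ∈
            ({halfTerm e R i, ((R (i + 1) - R i : ℝ) : EReal) + d i}
              ∪ {x | 2 ≤ i ∧ x = ((R (i + 1) - R i : ℝ) : EReal) + alphaT e R d 1 i (i - 1)}
              ∪ {x | i + 2 ≤ n ∧
                  x = ((R (i + 1) - R i : ℝ) : EReal) + alphaT e R d (i + 1) n 1}) := by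
          simp only [Set.mem_union, Set.mem_insert_iff, Set.mem_singleton_iff,
            Set.mem_setOf_eq]
          exact Or.inl (Or.inr ⟨by omega, trivial⟩)
        refine le_trans (sInf_le hmem) ?_
        rw [hT1]
        have hy : ((R i - R j : ℝ) : EReal) + d j ∈ alphaSet e i R d (i - 1) := by
          simp only [alphaSet, Set.mem_union, Set.mem_singleton_iff, Set.mem_setOf_eq, hii]
          exact Or.inl (Or.inr ⟨j, hj1, by omega, rfl⟩)
        calc ((R (i + 1) - R i : ℝ) : EReal) + sInf (alphaSet e i R d (i - 1))
            ≤ ((R (i + 1) - R i : ℝ) : EReal) + (((R i - R j : ℝ) : EReal) + d j) :=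
              add_le_add_right (sInf_le hy) _
          _ = ((R (i + 1) - R j : ℝ) : EReal) + d j := by
              rw [coe_add_coe_add]
              congr 1
              rw [EReal.coe_eq_coe_iff]
              push_cast
              ring
    · subst hx
      by_cases hji : j = i
      · subst hji
        refine sInf_le ?_
        simp only [Set.mem_union, Set.mem_insert_iff, Set.mem_singleton_iff,
          Set.mem_setOf_eq]
        exact Or.inl (Or.inl (Or.inr trivial))
      · have hmem : ((R (i + 1) - R i : ℝ) : EReal) + alphaT e R d (i + 1) n 1 ∈
            ({halfTerm e R i, ((R (i + 1) - R i : ℝ) : EReal) + d i}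
              ∪ {x | 2 ≤ i ∧ x = ((R (i + 1) - R i : ℝ) : EReal) + alphaT e R d 1 i (i - 1)}
              ∪ {x | i + 2 ≤ n ∧
                  x = ((R (i + 1) - R i : ℝ) : EReal) + alphaT e R d (i + 1) n 1}) := by
          simp only [Set.mem_union, Set.mem_insert_iff, Set.mem_singleton_iff,
            Set.mem_setOf_eq]
          exact Or.inr ⟨by omega, trivial⟩
        refine le_trans (sInf_le hmem) ?_
        rw [hT2]
        have hy : ((R (j + 1) - R (i + 1) : ℝ) : EReal) + d j ∈
            alphaSet e (n - i) (fun j => R (i + j)) (fun j => d (i + j)) 1 := by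
          simp only [alphaSet, Set.mem_union, Set.mem_singleton_iff, Set.mem_setOf_eq]
          refine Or.inr ⟨j - i, by omega, by omega, ?_⟩
          show ((R (j + 1) - R (i + 1) : ℝ) : EReal) + d j
            = ((R (i + (j - i + 1)) - R (i + 1) : ℝ) : EReal) + d (i + (j - i))
          have e1 : i + (j - i + 1) = j + 1 := by omega
          have e2 : i + (j - i) = j := by omega
          rw [e1, e2]
        calc ((R (i + 1) - R i : ℝ) : EReal)
              + sInf (alphaSet e (n - i) (fun j => R (i + j)) (fun j => d (i + j)) 1)
            ≤ ((R (i + 1) - R i : ℝ) : EReal)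
              + (((R (j + 1) - R (i + 1) : ℝ) : EReal) + d j) :=
              add_le_add_right (sInf_le hy) _
          _ = ((R (j + 1) - R i : ℝ) : EReal) + d j := by
              rw [coe_add_coe_add]
              congr 1
              rw [EReal.coe_eq_coe_iff]
              push_cast
              ring
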